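/- arXiv:0809.2843 — 8 statements merged into one kernel-verified Lean document; each statement's English description precedes it below -/
import Mathlib

section
/- Let A be a unital C*-algebra, let a ∈ A be self-adjoint, let r ∈ A be a projection, and let ε be a real number with 0 < ε < 1 and ‖a − r‖ < ε. Then every point x of the spectrum of a satisfies |x| < 2√ε or |x − 1| < 2√ε; that is, the spectrum of a is contained in (−2√ε, 2√ε) ∪ (1 − 2√ε, 1 + 2√ε). -/
theorem spectrum_near_projection
    {A : Type*} [NormedRing A] [StarRing A] [CStarRing A]
    [CompleteSpace A] [NormedAlgebra ℂ A] [StarModule ℂ A]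
    (a r : A) (ha : IsSelfAdjoint a)
    (hr : IsSelfAdjoint r) (hr2 : r * r = r)
    (ε : ℝ) (hε0 : 0 < ε) (hε1 : ε < 1) (hnorm : ‖a - r‖ < ε) :
    ∀ x ∈ spectrum ℝ a, |x| < 2 * Real.sqrt ε ∨ |x - 1| < 2 * Real.sqrt ε := by
  intro x hx
  rcases subsingleton_or_nontrivial A with hA | hA
  · exact absurd (isUnit_of_subsingleton _) (spectrum.mem_iff.mp hx)
  -- ‖r‖ ≤ 1
  have hrn : ‖r‖ ≤ 1 := by
    have h1 : ‖star r * r‖ = ‖r‖ * ‖r‖ := CStarRing.norm_star_mul_self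
    rw [hr.star_eq, hr2] at h1
    nlinarith [norm_nonneg r]
  have han : ‖a‖ < 1 + ε := by
    calc ‖a‖ = ‖a - r + r‖ := by rw [sub_add_cancel]
    _ ≤ ‖a - r‖ + ‖r‖ := norm_add_le _ _
    _ < ε + 1 := by linarith
    _ = 1 + ε := by ring
  -- norm of a*a - a
  have hb : ‖a * a - a‖ < 4 * ε := by
    have heq : a * a - a = a * (a - r) + (a - r) * r - (a - r) := by
      have h0 : a * (a - r) + (a - r) * r - (a - r) = a * a - r * r - a + r := by noncomm_ring
      rw [h0, hr2]; abel
    calc ‖a * a - a‖ = ‖a * (a - r) + (a - r) * r - (a - r)‖ := by rw [heq]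
    _ ≤ ‖a * (a - r) + (a - r) * r‖ + ‖a - r‖ := norm_sub_le _ _
    _ ≤ ‖a * (a - r)‖ + ‖(a - r) * r‖ + ‖a - r‖ := by
        have := norm_add_le (a * (a - r)) ((a - r) * r); linarith
    _ ≤ ‖a‖ * ‖a - r‖ + ‖a - r‖ * ‖r‖ + ‖a - r‖ := by
        have := norm_mul_le a (a - r); have := norm_mul_le (a - r) r; linarith
    _ < 4 * ε := by nlinarith [norm_nonneg (a - r), norm_nonneg a]
  -- x^2 - x ∈ spectrum of a*a - a
  have hmem : x ^ 2 - x ∈ spectrum ℝ (a * a - a) := by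
    have h := spectrum.subset_polynomial_aeval a (Polynomial.X ^ 2 - Polynomial.X : Polynomial ℝ)
    have : Polynomial.aeval a (Polynomial.X ^ 2 - Polynomial.X : Polynomial ℝ) = a * a - a := by
      simp [sq]
    rw [this] at h
    apply h
    exact ⟨x, hx, by simp⟩
  have hxb : |x ^ 2 - x| ≤ ‖a * a - a‖ := by
    simpa using spectrum.norm_le_norm_of_mem hmem
  have hxx : |x| * |x - 1| < 4 * ε := by
    rw [← abs_mul]
    have : x * (x - 1) = x ^ 2 - x := by ring
    rw [this]
    exact lt_of_le_of_lt hxb hb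
  by_contra hcon
  push_neg at hcon
  obtain ⟨h1, h2⟩ := hcon
  have hs : Real.sqrt ε * Real.sqrt ε = ε := Real.mul_self_sqrt hε0.le
  have hs0 : 0 < Real.sqrt ε := Real.sqrt_pos.mpr hε0
  nlinarith [abs_nonneg x, abs_nonneg (x - 1)]
end

section
/- Let A be a unital C*-algebra, let a ∈ A be self-adjoint, let r ∈ A be a projection, and let ε be a real number with 0 < ε < 1/16 and ‖a − r‖ < ε. Then there exists a projection r' ∈ A lying in the closed star-subalgebra of A generated by a such that ‖r' − a‖ < 2√ε. -/
open scoped ContinuousMapZero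

lemma cfcn_mem_closure_adjoin
    {A : Type*} [CStarAlgebra A]
    (a : A) (ha : IsSelfAdjoint a) (f : ℝ → ℝ) :
    cfcₙ f a ∈ (NonUnitalStarAlgebra.adjoin ℂ {a}).topologicalClosure := by
  set S := (NonUnitalStarAlgebra.adjoin ℂ {a}).topologicalClosure with hS
  by_cases hf : ContinuousOn f (quasispectrum ℝ a)
  · by_cases hf0 : f 0 = 0
    · rw [cfcₙ_apply f a hf hf0]
      have hmain : ∀ g : C(quasispectrum ℝ a, ℝ)₀, cfcₙHom ha g ∈ S := by
        intro g
        have hcl : IsClosed {g : C(quasispectrum ℝ a, ℝ)₀ | cfcₙHom ha g ∈ S} :=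
          (NonUnitalStarSubalgebra.isClosed_topologicalClosure _).preimage
            (cfcₙHom_continuous ha)
        have haS : a ∈ S :=
          (NonUnitalStarAlgebra.adjoin ℂ {a}).le_topologicalClosure
            (NonUnitalStarAlgebra.self_mem_adjoin_singleton ℂ a)
        have hid : cfcₙHom ha (ContinuousMapZero.id (quasispectrum ℝ a))
            = a := cfcₙHom_id ha
        refine ContinuousMapZero.induction_on_of_compact ?_ ?_ ?_ ?_ ?_ ?_ ?_ g
        · simpa using zero_mem S
        · rw [hid]; exact haS
        · rw [map_star, hid]; exact star_mem haS
        · intro f g hf hg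
          rw [map_add]; exact add_mem hf hg
        · intro f g hf hg
          rw [map_mul]; exact mul_mem hf hg
        · intro r g hg
          rw [map_smul, ← algebraMap_smul ℂ r (cfcₙHom ha g)]
          exact SMulMemClass.smul_mem _ hg
        · intro g hg
          have hmem : g ∈ closure {h : C(quasispectrum ℝ a, ℝ)₀ | cfcₙHom ha h ∈ S} :=
            mem_closure_iff_frequently.mpr hg
          rwa [hcl.closure_eq] at hmem
      exact hmain _
    · rw [cfcₙ_apply_of_not_map_zero a hf0]; exact zero_mem S
  · rw [cfcₙ_apply_of_not_continuousOn a hf]; exact zero_mem S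

theorem projection_in_cstar_algebra_generated_by_near_projection
    {A : Type*} [NormedRing A] [StarRing A] [CStarRing A]
    [CompleteSpace A] [NormedAlgebra ℂ A] [StarModule ℂ A]
    (a r : A) (ha : IsSelfAdjoint a)
    (hr : IsSelfAdjoint r) (hr2 : r * r = r)
    (ε : ℝ) (hε0 : 0 < ε) (hε1 : ε < 1 / 16) (hnorm : ‖a - r‖ < ε) :
    ∃ r' ∈ (NonUnitalStarAlgebra.adjoin ℂ {a}).topologicalClosure,
      IsSelfAdjoint r' ∧ r' * r' = r' ∧ ‖r' - a‖ < 2 * Real.sqrt ε := by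
  letI : CStarAlgebra A := ⟨⟩
  -- norm of the projection and of `a`
  have hrnorm : ‖r‖ ≤ 1 := by
    rcases eq_or_ne r 0 with h | h
    · simp [h]
    · have h1 : ‖r‖ * ‖r‖ = ‖r‖ := by
        calc ‖r‖ * ‖r‖ = ‖star r * r‖ := (CStarRing.norm_star_mul_self).symm
          _ = ‖r‖ := by rw [hr.star_eq, hr2]
      have h2 : (0:ℝ) < ‖r‖ := norm_pos_iff.mpr h
      nlinarith
  have hanorm : ‖a‖ ≤ 1 + ε := by
    have h : r + (a - r) = a := by abel
    calc ‖a‖ = ‖r + (a - r)‖ := by rw [h]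
      _ ≤ ‖r‖ + ‖a - r‖ := norm_add_le _ _
      _ ≤ 1 + ε := by linarith [hnorm.le]
  -- `a * a - a` is small
  set δ : ℝ := ε * (3 + ε) with hδ
  have hδpos : 0 < δ := by positivity
  have hδ4 : δ < 1 / 4 := by nlinarith
  have hsq : ‖a * a - a‖ ≤ δ := by
    have key : a * a - a = a * (a - r) + (a - r) * r + (r - a) := by
      rw [mul_sub, sub_mul, hr2]; abel
    calc ‖a * a - a‖ = ‖a * (a - r) + (a - r) * r + (r - a)‖ := by rw [key]
      _ ≤ ‖a * (a - r) + (a - r) * r‖ + ‖r - a‖ := norm_add_le _ _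
      _ ≤ ‖a * (a - r)‖ + ‖(a - r) * r‖ + ‖r - a‖ := by
          linarith [norm_add_le (a * (a - r)) ((a - r) * r)]
      _ ≤ ‖a‖ * ‖a - r‖ + ‖a - r‖ * ‖r‖ + ‖a - r‖ := by
          rw [← norm_neg (r - a), neg_sub]
          gcongr <;> [exact norm_mul_le _ _; exact norm_mul_le _ _]
      _ ≤ (1 + ε) * ε + ε * 1 + ε := by
          have h1 : ‖a - r‖ ≤ ε := hnorm.le
          have h2 : (0:ℝ) ≤ ‖a - r‖ := norm_nonneg _
          nlinarith [norm_nonneg a]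
      _ = δ := by ring
  -- points in the quasispectrum almost satisfy `t * t = t`
  have hquasi : ∀ t ∈ quasispectrum ℝ a, |t * t - t| ≤ δ := by
    intro t ht
    rw [quasispectrum_eq_spectrum_union_zero] at ht
    rcases ht with ht | ht
    · have hcfc : cfc (fun t : ℝ => t * t - t) a = a * a - a := by
        rw [cfc_sub (fun t : ℝ => t * t) (fun t : ℝ => t) a,
          cfc_mul (fun t : ℝ => t) (fun t : ℝ => t) a, cfc_id' ℝ a]
      have hle := norm_apply_le_norm_cfc (fun t : ℝ => t * t - t) a ht
      rw [hcfc] at hle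
      calc |t * t - t| = ‖t * t - t‖ := rfl
        _ ≤ ‖a * a - a‖ := hle
        _ ≤ δ := hsq
    · simp only [Set.mem_singleton_iff] at ht
      rw [ht]
      simpa using hδpos.le
  -- the step function
  set f : ℝ → ℝ := fun t => if 1/2 < t then 1 else 0 with hfdef
  have hfval_pos : ∀ t, 1/2 < t → f t = 1 := fun t h => if_pos h
  have hfval_neg : ∀ t, ¬ 1/2 < t → f t = 0 := fun t h => if_neg h
  have hf0 : f 0 = 0 := hfval_neg 0 (by norm_num)
  have hfsq : (fun x => f x * f x) = f := by
    funext x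
    by_cases h : 1/2 < x
    · rw [hfval_pos x h]; norm_num
    · rw [hfval_neg x h]; norm_num
  have hkey : ∀ t ∈ quasispectrum ℝ a, |f t - t| ≤ 2 * δ := by
    intro t ht
    have h1 := hquasi t ht
    have h2 : |t| * |t - 1| ≤ δ := by
      rw [← abs_mul]
      calc |t * (t - 1)| = |t * t - t| := by ring_nf
        _ ≤ δ := h1
    by_cases h : 1/2 < t
    · have habs : |t| = t := abs_of_pos (by linarith)
      have h3 : |t - 1| * (1/2) ≤ |t| * |t - 1| := by
        rw [habs]; nlinarith [abs_nonneg (t - 1)]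
      have h4 : |t - 1| ≤ 2 * δ := by linarith
      calc |f t - t| = |1 - t| := by rw [hfval_pos t h]
        _ = |t - 1| := abs_sub_comm _ _
        _ ≤ 2 * δ := h4
    · push_neg at h
      have h5 : |t| * (1/2) ≤ |t| * |t - 1| := by
        have : (1:ℝ)/2 ≤ |t - 1| := by
          rw [abs_sub_comm, abs_of_pos (by linarith)]; linarith
        nlinarith [abs_nonneg t]
      have h6 : |t| ≤ 2 * δ := by linarith
      calc |f t - t| = |0 - t| := by rw [hfval_neg t (not_lt.mpr h)]
        _ = |t| := by rw [zero_sub, abs_neg]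
        _ ≤ 2 * δ := h6
  -- quasispectrum avoids 1/2, so f is continuous on it
  have hfc : ContinuousOn f (quasispectrum ℝ a) := by
    intro t ht
    have h1 := hquasi t ht
    have hne : t ≠ 1/2 := by
      intro h
      rw [h, show (1:ℝ)/2 * (1/2) - 1/2 = -(1/4) by norm_num, abs_neg,
        abs_of_pos (by norm_num : (0:ℝ) < 1/4)] at h1
      linarith
    rcases lt_or_gt_of_ne hne with h | h
    · have hev : ∀ᶠ x in nhds t, f x = 0 := by
        filter_upwards [Iio_mem_nhds h] with x hx
        exact hfval_neg x (not_lt.mpr hx.le)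
      exact (Filter.EventuallyEq.continuousAt hev).continuousWithinAt
    · have hev : ∀ᶠ x in nhds t, f x = 1 := by
        filter_upwards [Ioi_mem_nhds h] with x hx
        exact hfval_pos x hx
      exact (Filter.EventuallyEq.continuousAt hev).continuousWithinAt
  refine ⟨cfcₙ f a, cfcn_mem_closure_adjoin a ha f, IsSelfAdjoint.cfcₙ, ?_, ?_⟩
  · rw [← cfcₙ_mul f f a hfc hf0 hfc hf0]
    exact cfcₙ_congr (fun x _ => congrFun hfsq x)
  · have hbound : 2 * δ < 2 * Real.sqrt ε := by
      have hs : Real.sqrt ε ^ 2 = ε := Real.sq_sqrt hε0.le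
      have hs0 : 0 < Real.sqrt ε := Real.sqrt_pos.mpr hε0
      have hs4 : Real.sqrt ε < 1/4 := by
        rw [show (1:ℝ)/4 = Real.sqrt (1/16) by
          rw [show (1:ℝ)/16 = (1/4)^2 by norm_num, Real.sqrt_sq (by norm_num)]]
        exact Real.sqrt_lt_sqrt hε0.le hε1
      have hlt : δ < Real.sqrt ε := by rw [hδ]; nlinarith
      linarith
    have hida : cfcₙ (id : ℝ → ℝ) a = a := cfcₙ_id ℝ a
    have heq : cfcₙ (fun x => f x - id x) a = cfcₙ f a - a := by
      rw [cfcₙ_sub f id a, hida]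
    rw [← heq]
    refine norm_cfcₙ_lt fun x hx => ?_
    calc ‖f x - id x‖ = |f x - x| := rfl
      _ ≤ 2 * δ := hkey x hx
      _ < 2 * Real.sqrt ε := hbound
end

section
/- Let A be a C*-algebra, let 𝒰 be a nonprincipal ultrafilter on ℕ, and let p, q : ℕ → A be sequences such that each p(n) and each q(n) is a projection. Suppose ‖q(n)·p(n)·q(n) − p(n)‖ tends to 0 along 𝒰. Then there exists a sequence p' : ℕ → A of projections such that p'(n) ≤ q(n) for every n (i.e., p'(n)·q(n) = p'(n)), and ‖p'(n) − p(n)‖ tends to 0 along 𝒰. -/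
open Filter

noncomputable def halfStep (x : ℝ) : ℝ := if x < 1/2 then 0 else 1

lemma halfStep_zero : halfStep 0 = 0 := by norm_num [halfStep]

lemma halfStep_mul_self (x : ℝ) : halfStep x * halfStep x = halfStep x := by
  unfold halfStep; split <;> norm_num

section aux

variable {A : Type*} [NonUnitalCStarAlgebra A]

lemma projection_norm_le_one {p : A} (h1 : IsSelfAdjoint p) (h2 : p * p = p) :
    ‖p‖ ≤ 1 := by
  by_contra h
  push_neg at h
  have hs := CStarRing.norm_star_mul_self (x := p)
  rw [h1.star_eq, h2] at hs
  nlinarith [norm_nonneg p]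

lemma cfcₙ_mem_closure_adjoin (b : A) (f : ℝ → ℝ) :
    cfcₙ f b ∈ closure (NonUnitalStarAlgebra.adjoin ℝ {b} : Set A) := by
  refine cfcₙ_cases (· ∈ closure (NonUnitalStarAlgebra.adjoin ℝ {b} : Set A)) b f
    (subset_closure (zero_mem _)) fun hf h0 ha => ?_
  set g : ContinuousMapZero (quasispectrum ℝ b) ℝ := ⟨⟨_, hf.restrict⟩, h0⟩ with hg
  show cfcₙHom (R := ℝ) ha g ∈ closure (NonUnitalStarAlgebra.adjoin ℝ {b} : Set A)
  have h₁ := (cfcₙHom_isClosedEmbedding (R := ℝ) ha).continuous.range_subset_closure_image_dense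
    (ContinuousMapZero.adjoin_id_dense (quasispectrum ℝ b)) (Set.mem_range_self g)
  refine closure_mono ?_ h₁
  have h₂ : (⇑(cfcₙHom (R := ℝ) ha)) ''
      (NonUnitalStarAlgebra.adjoin ℝ {(ContinuousMapZero.id (quasispectrum ℝ b))} : Set _) =
      (NonUnitalStarSubalgebra.map (cfcₙHom (R := ℝ) ha)
        (NonUnitalStarAlgebra.adjoin ℝ {(ContinuousMapZero.id (quasispectrum ℝ b))}) : Set A) := rfl
  rw [h₂, NonUnitalStarAlgHom.map_adjoin_singleton]
  have hid : (cfcₙHom (R := ℝ) ha) (ContinuousMapZero.id (quasispectrum ℝ b)) = b :=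
    cfcₙHom_id (R := ℝ) ha
  rw [hid]

lemma absorb_of_mem_closure_adjoin {b q : A} (hq : star q = q)
    (hbq : b * q = b) (hqb : q * b = b)
    {x : A} (hx : x ∈ closure (NonUnitalStarAlgebra.adjoin ℝ {b} : Set A)) :
    x * q = x ∧ q * x = x := by
  have hS : IsClosed {y : A | y * q = y ∧ q * y = y} :=
    IsClosed.inter (isClosed_eq (by fun_prop) continuous_id)
      (isClosed_eq (by fun_prop) continuous_id)
  refine closure_minimal ?_ hS hx
  intro y hy
  induction hy using NonUnitalStarAlgebra.adjoin_induction with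
  | mem z hz =>
    rw [Set.mem_singleton_iff] at hz
    subst hz
    exact ⟨hbq, hqb⟩
  | add u v hu hv hu' hv' => exact ⟨by rw [add_mul, hu'.1, hv'.1], by rw [mul_add, hu'.2, hv'.2]⟩
  | zero => exact ⟨zero_mul q, mul_zero q⟩
  | mul u v hu hv hu' hv' =>
    exact ⟨by rw [mul_assoc, hv'.1], by rw [← mul_assoc, hu'.2]⟩
  | smul r u hu hu' => exact ⟨by rw [smul_mul_assoc, hu'.1], by rw [mul_smul_comm, hu'.2]⟩
  | star u hu hu' =>
    constructor
    · conv_lhs => rw [← hq]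
      rw [← star_mul, hu'.2]
    · conv_lhs => rw [← hq]
      rw [← star_mul, hu'.1]

lemma key_projection {b : A} (hb : IsSelfAdjoint b) (hε : ‖b * b - b‖ < 1/16) :
    IsSelfAdjoint (cfcₙ halfStep b) ∧ cfcₙ halfStep b * cfcₙ halfStep b = cfcₙ halfStep b ∧
      ‖cfcₙ halfStep b - b‖ ≤ 2 * ‖b * b - b‖ := by
  set ε := ‖b * b - b‖ with hεdef
  have hε0 : 0 ≤ ε := norm_nonneg _
  -- the quasispectrum estimate
  have hcb : cfcₙ (fun x : ℝ => x * x - x) b = b * b - b := by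
    rw [cfcₙ_sub (fun x : ℝ => x * x) (fun x : ℝ => x) b (by fun_prop) (by norm_num)
      (by fun_prop) rfl, cfcₙ_mul (fun x : ℝ => x) (fun x : ℝ => x) b (by fun_prop) rfl
      (by fun_prop) rfl, cfcₙ_id' ℝ b]
  have hspec : ∀ x ∈ quasispectrum ℝ b, |x * x - x| ≤ ε := by
    intro x hx
    have := norm_apply_le_norm_cfcₙ (fun x : ℝ => x * x - x) b hx (by fun_prop) (by norm_num) hb
    rwa [hcb, Real.norm_eq_abs] at this
  have hcases : ∀ x ∈ quasispectrum ℝ b,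
      (x < 1/2 → |x| ≤ 2 * ε) ∧ (¬ x < 1/2 → |x - 1| ≤ 2 * ε) := by
    intro x hx
    have h := hspec x hx
    rw [abs_le] at h
    constructor
    · intro hx2
      rw [abs_le]
      constructor <;> nlinarith
    · intro hx2
      push_neg at hx2
      rw [abs_le]
      constructor <;> nlinarith
  -- continuity of halfStep on the quasispectrum
  have hcont : ContinuousOn halfStep (quasispectrum ℝ b) := by
    intro x hx
    apply ContinuousAt.continuousWithinAt
    by_cases hx2 : x < 1/2
    · have hev : ∀ᶠ y in nhds x, halfStep y = (fun _ => (0:ℝ)) y := by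
        filter_upwards [Iio_mem_nhds hx2] with y hy
        simp only [halfStep, if_pos (Set.mem_Iio.mp hy)]
      rw [continuousAt_congr hev]
      exact continuousAt_const
    · have hgap : 1/2 < x := by
        have := ((hcases x hx).2 hx2)
        rw [abs_le] at this
        push_neg at hx2
        nlinarith
      have hev : ∀ᶠ y in nhds x, halfStep y = (fun _ => (1:ℝ)) y := by
        filter_upwards [Ioi_mem_nhds hgap] with y hy
        have : ¬ y < 1/2 := by
          have := Set.mem_Ioi.mp hy
          linarith
        simp only [halfStep, if_neg this]
      rw [continuousAt_congr hev]
      exact continuousAt_const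
  refine ⟨cfcₙ_predicate halfStep b, ?_, ?_⟩
  · rw [← cfcₙ_mul halfStep halfStep b hcont halfStep_zero hcont halfStep_zero]
    exact cfcₙ_congr fun x _ => halfStep_mul_self x
  · have hsub : cfcₙ (fun x : ℝ => halfStep x - x) b = cfcₙ halfStep b - b := by
      rw [cfcₙ_sub halfStep (fun x : ℝ => x) b hcont halfStep_zero (by fun_prop) rfl,
        cfcₙ_id' ℝ b]
    rw [← hsub]
    apply norm_cfcₙ_le
    intro x hx
    rw [Real.norm_eq_abs]
    by_cases hx2 : x < 1/2
    · have := (hcases x hx).1 hx2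
      rw [show halfStep x = 0 from if_pos hx2]
      rw [abs_sub_comm, sub_zero] at *
      exact this
    · have := (hcases x hx).2 hx2
      rw [show halfStep x = 1 from if_neg hx2]
      rwa [abs_sub_comm x 1] at this

end aux

theorem exists_representing_sequence_below
    {A : Type*} [NonUnitalNormedRing A] [StarRing A] [CStarRing A]
    [CompleteSpace A] [NormedSpace ℂ A] [IsScalarTower ℂ A A]
    [SMulCommClass ℂ A A] [StarModule ℂ A]
    (𝒰 : Ultrafilter ℕ) (h𝒰 : (𝒰 : Filter ℕ) ≤ Filter.cofinite)
    (p q : ℕ → A)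
    (hp : ∀ n, IsSelfAdjoint (p n) ∧ p n * p n = p n)
    (hq : ∀ n, IsSelfAdjoint (q n) ∧ q n * q n = q n)
    (hle : Tendsto (fun n => ‖q n * p n * q n - p n‖) 𝒰 (nhds 0)) :
    ∃ p' : ℕ → A,
      (∀ n, IsSelfAdjoint (p' n) ∧ p' n * p' n = p' n) ∧
      (∀ n, p' n * q n = p' n) ∧
      Tendsto (fun n => ‖p' n - p n‖) 𝒰 (nhds 0) := by
  classical
  letI : NonUnitalCStarAlgebra A :=
    { ‹NonUnitalNormedRing A›, ‹StarRing A›, ‹CStarRing A›, ‹NormedSpace ℂ A›,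
      ‹CompleteSpace A›, ‹IsScalarTower ℂ A A›, ‹SMulCommClass ℂ A A›, ‹StarModule ℂ A› with }
  set b : ℕ → A := fun n => q n * p n * q n with hbdef
  have hbsa : ∀ n, IsSelfAdjoint (b n) := by
    intro n
    have := (hp n).1
    have := (hq n).1
    simp only [hbdef, IsSelfAdjoint, star_mul, (hp n).1.star_eq, (hq n).1.star_eq, mul_assoc]
  have hbq : ∀ n, b n * q n = b n := by
    intro n
    simp only [hbdef, mul_assoc, (hq n).2]
  have hqb : ∀ n, q n * b n = b n := by
    intro n
    simp only [hbdef, ← mul_assoc, (hq n).2]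
  -- norm estimate: ‖b n * b n - b n‖ ≤ 3 * ‖b n - p n‖ + ‖b n - p n‖ ^ 2
  have hnorm : ∀ n, ‖b n * b n - b n‖ ≤ 3 * ‖b n - p n‖ + ‖b n - p n‖ * ‖b n - p n‖ := by
    intro n
    set e := b n - p n with hedef
    have hkey : p n * e + e * p n + e * e - e = b n * b n - b n := by
      simp only [hedef, mul_sub, sub_mul, (hp n).2]
      abel
    calc ‖b n * b n - b n‖ = ‖p n * e + e * p n + e * e - e‖ := by rw [hkey]
      _ ≤ ‖p n * e + e * p n + e * e‖ + ‖e‖ := norm_sub_le _ _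
      _ ≤ ‖p n * e + e * p n‖ + ‖e * e‖ + ‖e‖ := by
          gcongr; exact norm_add_le _ _
      _ ≤ ‖p n * e‖ + ‖e * p n‖ + ‖e * e‖ + ‖e‖ := by
          gcongr; exact norm_add_le _ _
      _ ≤ ‖p n‖ * ‖e‖ + ‖e‖ * ‖p n‖ + ‖e‖ * ‖e‖ + ‖e‖ := by
          gcongr <;> exact norm_mul_le _ _
      _ ≤ 1 * ‖e‖ + ‖e‖ * 1 + ‖e‖ * ‖e‖ + ‖e‖ := by
          have h1 := projection_norm_le_one (hp n).1 (hp n).2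
          gcongr <;> exact h1
      _ = 3 * ‖e‖ + ‖e‖ * ‖e‖ := by ring
  refine ⟨fun n => if ‖b n * b n - b n‖ < 1/16 then cfcₙ halfStep (b n) else 0, ?_, ?_, ?_⟩
  · intro n
    by_cases hn : ‖b n * b n - b n‖ < 1/16
    · simp only [hn, if_pos]
      obtain ⟨h1, h2, _⟩ := key_projection (hbsa n) hn
      exact ⟨h1, h2⟩
    · simp only [hn, if_neg, not_false_iff]
      exact ⟨IsSelfAdjoint.zero A, by simp⟩
  · intro n
    by_cases hn : ‖b n * b n - b n‖ < 1/16
    · simp only [hn, if_pos]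
      exact (absorb_of_mem_closure_adjoin (hq n).1.star_eq (hbq n) (hqb n)
        (cfcₙ_mem_closure_adjoin (b n) halfStep)).1
    · simp only [hn, if_neg, not_false_iff]
      exact zero_mul _
  · rw [Metric.tendsto_nhds]
    intro ε hε
    set δ := min (ε/9) (1/100) with hδdef
    have hδ0 : 0 < δ := lt_min (by linarith) (by norm_num)
    have hδ1 : δ ≤ 1/100 := min_le_right _ _
    have hδε : 9 * δ ≤ ε := by
      have := min_le_left (ε/9) (1/100)
      calc 9 * δ ≤ 9 * (ε/9) := by gcongr
        _ = ε := by ring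
    have hev : ∀ᶠ n in (𝒰 : Filter ℕ), ‖b n - p n‖ < δ := by
      have := Metric.tendsto_nhds.mp hle δ hδ0
      filter_upwards [this] with n hn
      rw [Real.dist_eq, sub_zero, abs_of_nonneg (norm_nonneg _)] at hn
      exact hn
    filter_upwards [hev] with n hn
    have hsmall : ‖b n * b n - b n‖ < 1/16 := by
      have h1 := hnorm n
      have h2 : ‖b n - p n‖ * ‖b n - p n‖ ≤ ‖b n - p n‖ := by
        nlinarith [norm_nonneg (b n - p n)]
      nlinarith
    simp only [hsmall, if_pos]
    rw [Real.dist_eq, sub_zero, abs_of_nonneg (norm_nonneg _)]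
    obtain ⟨_, _, h3⟩ := key_projection (hbsa n) hsmall
    calc ‖cfcₙ halfStep (b n) - p n‖
        ≤ ‖cfcₙ halfStep (b n) - b n‖ + ‖b n - p n‖ := norm_sub_le_norm_sub_add_norm_sub _ _ _
      _ ≤ 2 * ‖b n * b n - b n‖ + ‖b n - p n‖ := by gcongr
      _ ≤ 2 * (3 * ‖b n - p n‖ + ‖b n - p n‖ * ‖b n - p n‖) + ‖b n - p n‖ := by
          have := hnorm n; gcongr
      _ < ε := by nlinarith [norm_nonneg (b n - p n)]
end

section
/- Let A be a unital C*-algebra, let 𝒰 be a nonprincipal ultrafilter on ℕ, and let p, q : ℕ → A be sequences such that each p(n) and each q(n) is a projection. Suppose ‖q(n)·p(n)·q(n) − p(n)‖ tends to 0 along 𝒰. Then there exists a sequence q' : ℕ → A of projections such that p(n) ≤ q'(n) for every n (i.e., p(n)·q'(n) = p(n)), and ‖q'(n) − q(n)‖ tends to 0 along 𝒰. -/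
open Filter Polynomial

section Aux

variable {A : Type*} [CStarAlgebra A]

lemma my_proj_norm_le_one {r : A} (h1 : IsSelfAdjoint r) (h2 : r * r = r) : ‖r‖ ≤ 1 := by
  have h := CStarRing.norm_star_mul_self (x := r)
  rw [h1.star_eq, h2] at h
  nlinarith [norm_nonneg r]

lemma my_abs_quad_le [Nontrivial A] {y : A} {x : ℝ} (hx : x ∈ spectrum ℝ y) :
    |x * x - x| ≤ ‖y * y - y‖ := by
  have hmem : x * x - x ∈ spectrum ℝ (y * y - y) := by
    rw [spectrum.mem_iff] at hx ⊢
    intro hu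
    apply hx
    have hc : algebraMap ℝ A x * y = y * algebraMap ℝ A x := Algebra.commutes x y
    have hfact : algebraMap ℝ A (x * x - x) - (y * y - y)
        = (algebraMap ℝ A x - y) * (algebraMap ℝ A (x - 1) + y) := by
      rw [map_sub, map_sub, map_mul, map_one]
      have hexp : (algebraMap ℝ A x - y) * (algebraMap ℝ A x - 1 + y)
          = algebraMap ℝ A x * algebraMap ℝ A x - algebraMap ℝ A x
            + (algebraMap ℝ A x * y - y * algebraMap ℝ A x) + (y - y * y) := by
        noncomm_ring
      rw [hexp, hc, sub_self, add_zero]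
      noncomm_ring
    rw [hfact] at hu
    have hcomm : Commute (algebraMap ℝ A x - y) (algebraMap ℝ A (x - 1) + y) := by
      have h1 : Commute (algebraMap ℝ A x) (algebraMap ℝ A (x - 1)) :=
        Algebra.commutes x (algebraMap ℝ A (x - 1))
      have h2 : Commute (algebraMap ℝ A x) y := Algebra.commutes x y
      have h3 : Commute y (algebraMap ℝ A (x - 1)) := (Algebra.commutes (x - 1) y).symm
      exact Commute.sub_left (h1.add_right h2) (h3.add_right (Commute.refl y))
    exact (hcomm.isUnit_mul_iff.mp hu).1
  simpa using spectrum.norm_le_norm_of_mem hmem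

lemma my_mul_cfc_eq_self [Nontrivial A] {y e : A} (hy : IsSelfAdjoint y) (he : e * y = e)
    {f : ℝ → ℝ} (hf : ContinuousOn f (spectrum ℝ y)) (hf1 : f 1 = 1) :
    e * cfc f y = e := by
  rcases eq_or_ne e 0 with rfl | he0
  · simp
  have h1 : (1 : ℝ) ∈ spectrum ℝ y := by
    rw [spectrum.mem_iff]
    intro hu
    obtain ⟨u, hu⟩ := hu
    apply he0
    have hey : e * (algebraMap ℝ A 1 - y) = 0 := by
      rw [map_one, mul_sub, mul_one, he, sub_self]
    calc e = e * (↑u * ↑u⁻¹) := by rw [u.mul_inv, mul_one]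
    _ = (e * ↑u) * ↑u⁻¹ := by rw [mul_assoc]
    _ = 0 := by rw [hu, hey, zero_mul]
  have hpow : ∀ n : ℕ, e * y ^ n = e := by
    intro n; induction n with
    | zero => simp
    | succ n ih => rw [pow_succ, ← mul_assoc, ih, he]
  have haev : ∀ P : ℝ[X], e * (aeval y P) = P.eval 1 • e := by
    intro P
    induction P using Polynomial.induction_on' with
    | add r t hr ht => rw [map_add, mul_add, hr, ht, eval_add, add_smul]
    | monomial n a =>
      rw [aeval_monomial, eval_monomial, one_pow, mul_one,
        Algebra.algebraMap_eq_smul_one, smul_mul_assoc, one_mul, mul_smul_comm, hpow]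
  set σ := spectrum ℝ y with hσ
  let Φ : C(σ, ℝ) → A := fun g => e * cfcHom hy (R := ℝ) g
  let Ψ : C(σ, ℝ) → A := fun g => g ⟨1, h1⟩ • e
  have hΦ : Continuous Φ := continuous_const.mul (cfcHom_isClosedEmbedding hy).continuous
  have hΨ : Continuous Ψ := (continuous_eval_const (F := C(σ, ℝ)) (⟨1, h1⟩ : σ)).smul continuous_const
  have hS : Set.EqOn Φ Ψ (polynomialFunctions σ) := by
    intro g hg
    obtain ⟨P, -, rfl⟩ := hg
    have hPc : cfcHom hy (P.toContinuousMapOn σ) = aeval y P := by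
      have h3 : cfc (fun x : ℝ => P.eval x) y = cfcHom hy (P.toContinuousMapOn σ) := by
        rw [cfc_apply (fun x : ℝ => P.eval x) y hy (by fun_prop)]
        congr
      rw [← h3]
      exact cfc_polynomial P y hy
    show e * cfcHom hy (P.toContinuousMapOn σ) = _
    rw [hPc, haev P]
    congr 1
  have hdense : Dense (polynomialFunctions σ : Set C(σ, ℝ)) := by
    rw [dense_iff_closure_eq, ← Subalgebra.topologicalClosure_coe,
      polynomialFunctions.topologicalClosure]
    simp
  have heq : Φ = Ψ := Continuous.ext_on hdense hΦ hΨ hS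
  have happ := congrFun heq ⟨σ.restrict f, hf.restrict⟩
  rw [cfc_apply f y hy hf]
  calc e * cfcHom hy ⟨σ.restrict f, hf.restrict⟩
      = Ψ ⟨σ.restrict f, hf.restrict⟩ := happ
  _ = f 1 • e := rfl
  _ = e := by rw [hf1, one_smul]

end Aux


set_option maxHeartbeats 1000000 in
theorem exists_representing_sequence_above
    {A : Type*} [NormedRing A] [StarRing A] [CStarRing A]
    [CompleteSpace A] [NormedAlgebra ℂ A] [StarModule ℂ A]
    (𝒰 : Ultrafilter ℕ) (h𝒰 : (𝒰 : Filter ℕ) ≤ Filter.cofinite)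
    (p q : ℕ → A)
    (hp : ∀ n, IsSelfAdjoint (p n) ∧ p n * p n = p n)
    (hq : ∀ n, IsSelfAdjoint (q n) ∧ q n * q n = q n)
    (hle : Tendsto (fun n => ‖q n * p n * q n - p n‖) 𝒰 (nhds 0)) :
    ∃ q' : ℕ → A,
      (∀ n, IsSelfAdjoint (q' n) ∧ q' n * q' n = q' n) ∧
      (∀ n, p n * q' n = p n) ∧
      Tendsto (fun n => ‖q' n - q n‖) 𝒰 (nhds 0) := by
  letI : CStarAlgebra A := { }
  rcases subsingleton_or_nontrivial A with hA | hA
  · refine ⟨q, hq, fun n => Subsingleton.elim _ _, ?_⟩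
    have h0 : (fun n => ‖q n - q n‖) = fun _ => (0 : ℝ) := by
      funext n; simp
    rw [h0]
    exact tendsto_const_nhds
  classical
  set f : ℝ → ℝ := fun t => if t < (1/2 : ℝ) then 0 else 1 with hf_def
  have hf0' : ∀ t : ℝ, t < 1/2 → f t = 0 := by
    intro t ht
    show (if t < (1/2 : ℝ) then (0:ℝ) else 1) = 0
    exact if_pos ht
  have hf1' : ∀ t : ℝ, ¬ t < 1/2 → f t = 1 := by
    intro t ht
    show (if t < (1/2 : ℝ) then (0:ℝ) else 1) = 1
    exact if_neg ht
  have hff : ∀ t, f t * f t = f t := by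
    intro t
    by_cases h : t < (1/2 : ℝ)
    · rw [hf0' t h, mul_zero]
    · rw [hf1' t h, mul_one]
  have hf1 : f 1 = 1 := hf1' 1 (by norm_num)
  set y : ℕ → A := fun n => p n + (1 - p n) * q n * (1 - p n) with hy_def
  have hy_sa : ∀ n, IsSelfAdjoint (y n) := by
    intro n
    have hp' := (hp n).1
    have hq' := (hq n).1
    have hs' : IsSelfAdjoint ((1 : A) - p n) := (IsSelfAdjoint.one A).sub hp'
    refine hp'.add ?_
    rw [IsSelfAdjoint, star_mul, star_mul, hs'.star_eq, hq'.star_eq, mul_assoc]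
  have hpy : ∀ n, p n * y n = p n := by
    intro n
    have hps : p n * ((1 : A) - p n) = 0 := by
      rw [mul_sub, mul_one, (hp n).2, sub_self]
    show p n * (p n + (1 - p n) * q n * (1 - p n)) = p n
    rw [mul_add, (hp n).2, ← mul_assoc, ← mul_assoc, hps, zero_mul, zero_mul, add_zero]
  set q' : ℕ → A := fun n =>
    if _ : ContinuousOn f (spectrum ℝ (y n)) then cfc f (y n) else 1 with hq'_def
  have hq'_pos : ∀ n, ContinuousOn f (spectrum ℝ (y n)) → q' n = cfc f (y n) := by
    intro n hc
    show (if _ : ContinuousOn f (spectrum ℝ (y n)) then cfc f (y n) else 1) = cfc f (y n)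
    exact dif_pos hc
  have hq'_neg : ∀ n, ¬ ContinuousOn f (spectrum ℝ (y n)) → q' n = 1 := by
    intro n hc
    show (if _ : ContinuousOn f (spectrum ℝ (y n)) then cfc f (y n) else 1) = 1
    exact dif_neg hc
  have hq'_proj : ∀ n, IsSelfAdjoint (q' n) ∧ q' n * q' n = q' n := by
    intro n
    by_cases hcont : ContinuousOn f (spectrum ℝ (y n))
    · rw [hq'_pos n hcont]
      refine ⟨cfc_predicate f (y n), ?_⟩
      rw [← cfc_mul f f (y n) hcont hcont]
      exact cfc_congr fun x _ => hff x
    · rw [hq'_neg n hcont]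
      exact ⟨IsSelfAdjoint.one A, one_mul 1⟩
  have hq'_above : ∀ n, p n * q' n = p n := by
    intro n
    by_cases hcont : ContinuousOn f (spectrum ℝ (y n))
    · rw [hq'_pos n hcont]
      exact my_mul_cfc_eq_self (hy_sa n) (hpy n) hcont hf1
    · rw [hq'_neg n hcont, mul_one]
  refine ⟨q', hq'_proj, hq'_above, ?_⟩
  rw [Metric.tendsto_nhds] at hle ⊢
  intro ε hε
  have hδpos : (0 : ℝ) < min (ε/40) (1/100) := by positivity
  filter_upwards [hle _ hδpos] with n hn
  rw [Real.dist_eq, sub_zero, abs_of_nonneg (norm_nonneg _)] at hn ⊢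
  set P := p n with hP_def
  set Q := q n with hQ_def
  have hP2 : P * P = P := (hp n).2
  have hQ2 : Q * Q = Q := (hq n).2
  have hPsa : IsSelfAdjoint P := (hp n).1
  have hQsa : IsSelfAdjoint Q := (hq n).1
  set d : ℝ := ‖Q * P * Q - P‖ with hd_def
  have hd0 : 0 ≤ d := norm_nonneg _
  have hd100 : d < 1/100 := lt_of_lt_of_le hn (min_le_right _ _)
  have hdε : d < ε/40 := lt_of_lt_of_le hn (min_le_left _ _)
  have hPn : ‖P‖ ≤ 1 := my_proj_norm_le_one hPsa hP2
  have hQn : ‖Q‖ ≤ 1 := my_proj_norm_le_one hQsa hQ2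
  have hsQ : IsSelfAdjoint ((1 : A) - Q) := (IsSelfAdjoint.one A).sub hQsa
  have hsQ2 : ((1 : A) - Q) * (1 - Q) = 1 - Q := by
    rw [sub_mul, one_mul, mul_sub, mul_one, hQ2]
    abel
  have hsQn : ‖(1 : A) - Q‖ ≤ 1 := my_proj_norm_le_one hsQ hsQ2
  have e1 : ‖((1 : A) - Q) * P‖ ≤ d := by
    have h0 : ((1 : A) - Q) * Q = 0 := by
      rw [sub_mul, one_mul, hQ2, sub_self]
    have h : ((1 : A) - Q) * P = (1 - Q) * (P - Q * P * Q) := by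
      have h1 : ((1 : A) - Q) * (Q * P * Q) = 0 := by
        rw [show Q * P * Q = Q * (P * Q) from mul_assoc _ _ _, ← mul_assoc, h0, zero_mul]
      rw [mul_sub, h1, sub_zero]
    calc ‖((1 : A) - Q) * P‖ = ‖((1 : A) - Q) * (P - Q * P * Q)‖ := by rw [h]
    _ ≤ ‖(1 : A) - Q‖ * ‖P - Q * P * Q‖ := norm_mul_le _ _
    _ ≤ 1 * d := by
        refine mul_le_mul hsQn (le_of_eq ?_) (norm_nonneg _) zero_le_one
        rw [hd_def, ← norm_neg]
        congr 1
        abel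
    _ = d := one_mul d
  have e2 : ‖P * ((1 : A) - Q)‖ ≤ d := by
    have h : P * ((1 : A) - Q) = star (((1 : A) - Q) * P) := by
      rw [star_mul, hPsa.star_eq, hsQ.star_eq]
    rw [h, norm_star]
    exact e1
  have e3 : ‖P - P * Q * P‖ ≤ d := by
    have h : P - P * Q * P = (P * ((1 : A) - Q)) * P := by
      rw [mul_sub, mul_one, sub_mul, hP2]
    rw [h]
    calc ‖(P * ((1 : A) - Q)) * P‖ ≤ ‖P * ((1 : A) - Q)‖ * ‖P‖ := norm_mul_le _ _
    _ ≤ d * 1 := mul_le_mul e2 hPn (norm_nonneg _) hd0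
    _ = d := mul_one d
  have e4 : ‖y n - Q‖ ≤ 3 * d := by
    have hYQ : y n - Q = P * ((1 : A) - Q) - ((Q * P - P) + (P - P * Q * P)) := by
      show P + ((1 : A) - P) * Q * (1 - P) - Q = _
      noncomm_ring
    rw [hYQ]
    have h5 : ‖Q * P - P‖ ≤ d := by
      have : Q * P - P = -(((1:A) - Q) * P) := by noncomm_ring
      rw [this, norm_neg]
      exact e1
    calc ‖P * ((1:A) - Q) - ((Q * P - P) + (P - P * Q * P))‖
        ≤ ‖P * ((1:A) - Q)‖ + ‖(Q * P - P) + (P - P * Q * P)‖ := norm_sub_le _ _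
    _ ≤ ‖P * ((1:A) - Q)‖ + (‖Q * P - P‖ + ‖P - P * Q * P‖) :=
        add_le_add le_rfl (norm_add_le _ _)
    _ ≤ d + (d + d) := add_le_add e2 (add_le_add h5 e3)
    _ = 3 * d := by ring
  set D : A := y n - Q with hD_def
  have hD0 : 0 ≤ ‖D‖ := norm_nonneg _
  have hQD : ‖Q * D‖ ≤ ‖D‖ :=
    (norm_mul_le _ _).trans (by nlinarith)
  have hDQ : ‖D * Q‖ ≤ ‖D‖ :=
    (norm_mul_le _ _).trans (by nlinarith)
  have hDD : ‖D * D‖ ≤ ‖D‖ * ‖D‖ := norm_mul_le _ _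
  have e5 : ‖y n * y n - y n‖ ≤ 3 * ‖D‖ + ‖D‖ * ‖D‖ := by
    have h : y n * y n - y n = Q * D + D * Q + D * D - D + (Q * Q - Q) := by
      rw [hD_def]
      noncomm_ring
    rw [h, hQ2, sub_self, add_zero]
    calc ‖Q * D + D * Q + D * D - D‖
        ≤ ‖Q * D + D * Q + D * D‖ + ‖D‖ := norm_sub_le _ _
    _ ≤ (‖Q * D + D * Q‖ + ‖D * D‖) + ‖D‖ := by gcongr; exact norm_add_le _ _
    _ ≤ ((‖Q * D‖ + ‖D * Q‖) + ‖D * D‖) + ‖D‖ := by gcongr; exact norm_add_le _ _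
    _ ≤ ((‖D‖ + ‖D‖) + ‖D‖ * ‖D‖) + ‖D‖ := by gcongr
    _ = 3 * ‖D‖ + ‖D‖ * ‖D‖ := by ring
  set m : ℝ := ‖y n * y n - y n‖ with hm_def
  have hm0 : 0 ≤ m := norm_nonneg _
  have hm10d : m ≤ 10 * d := by nlinarith [e4]
  have hm110 : m < 1/10 := by nlinarith
  have e6 : ∀ x ∈ spectrum ℝ (y n), |x * x - x| ≤ m := fun x hx => my_abs_quad_le hx
  have hne : ∀ x ∈ spectrum ℝ (y n), x ≠ (1/2 : ℝ) := by
    intro x hx hx2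
    have h := e6 x hx
    rw [hx2, show (1/2 : ℝ) * (1/2) - 1/2 = -(1/4) by norm_num, abs_neg,
      abs_of_nonneg (by norm_num : (0:ℝ) ≤ 1/4)] at h
    linarith
  have hcont : ContinuousOn f (spectrum ℝ (y n)) := by
    intro x hx
    rcases lt_or_gt_of_ne (hne x hx) with h | h
    · refine ContinuousAt.continuousWithinAt ?_
      refine Filter.EventuallyEq.continuousAt (y := (0:ℝ)) ?_
      filter_upwards [Iio_mem_nhds h] with t ht
      exact hf0' t ht
    · refine ContinuousAt.continuousWithinAt ?_
      refine Filter.EventuallyEq.continuousAt (y := (1:ℝ)) ?_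
      filter_upwards [Ioi_mem_nhds h] with t ht
      exact hf1' t (not_lt.mpr (le_of_lt ht))
  have e10 : ‖cfc f (y n) - y n‖ ≤ 2 * m := by
    have hid : cfc f (y n) - y n = cfc (fun x : ℝ => f x - x) (y n) := by
      rw [cfc_sub f (fun x : ℝ => x) (y n) hcont (by fun_prop), cfc_id' ℝ (y n) (hy_sa n)]
    rw [hid]
    refine norm_cfc_le (by positivity) fun x hx => ?_
    have h6' : -m ≤ x * x - x ∧ x * x - x ≤ m := abs_le.mp (e6 x hx)
    obtain ⟨h6a, h6b⟩ := h6'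
    rw [Real.norm_eq_abs]
    by_cases h : x < (1/2 : ℝ)
    · rw [hf0' x h, zero_sub, abs_neg]
      rcases le_or_gt 0 x with h0 | h0
      · rw [abs_of_nonneg h0]; nlinarith
      · rw [abs_of_neg h0]; nlinarith
    · rw [hf1' x h]
      push_neg at h
      rcases le_or_gt x 1 with h1 | h1
      · rw [abs_of_nonneg (by linarith)]; nlinarith
      · rw [abs_of_neg (by linarith)]; nlinarith
  calc ‖q' n - Q‖ = ‖(cfc f (y n) - y n) + (y n - Q)‖ := by
        rw [hq'_pos n hcont]
        congr 1
        abel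
  _ ≤ ‖cfc f (y n) - y n‖ + ‖y n - Q‖ := norm_add_le _ _
  _ ≤ 2 * m + 3 * d := add_le_add e10 e4
  _ ≤ 2 * (10 * d) + 3 * d := by linarith
  _ = 23 * d := by ring
  _ < 23 * (ε/40) := by linarith
  _ < ε := by linarith
end

section
/- Let A be a C*-algebra, let 𝒰 be a nonprincipal ultrafilter on ℕ, and let r : ℕ → ℕ → A be a doubly-indexed family such that each r(m)(n) is a projection and r(m)(n) ≤ r(m+1)(n) for all m, n. Let s : ℕ → A be a sequence of projections such that for every m the quantity ‖r(m)(n)·s(n) − r(m)(n)‖ tends to 0 along 𝒰 (as a function of n). Then there exists h : ℕ → ℕ such that: (i) for every m, the set {n : m ≤ h(n)} belongs to 𝒰, and (ii) ‖r(h(n))(n)·s(n) − r(h(n))(n)‖ tends to 0 along 𝒰. -/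
open Filter

theorem exists_diagonal_projection_between
    {A : Type*} [NonUnitalNormedRing A] [StarRing A] [CStarRing A]
    [CompleteSpace A] [NormedSpace ℂ A] [IsScalarTower ℂ A A]
    [SMulCommClass ℂ A A] [StarModule ℂ A]
    (𝒰 : Ultrafilter ℕ) (h𝒰 : (𝒰 : Filter ℕ) ≤ Filter.cofinite)
    (r : ℕ → ℕ → A)
    (hr : ∀ m n, IsSelfAdjoint (r m n) ∧ r m n * r m n = r m n)
    (hmono : ∀ m n, r m n * r (m + 1) n = r m n)
    (s : ℕ → A)
    (hs : ∀ n, IsSelfAdjoint (s n) ∧ s n * s n = s n)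
    (hbelow : ∀ m, Tendsto (fun n => ‖r m n * s n - r m n‖) 𝒰 (nhds 0)) :
    ∃ h : ℕ → ℕ,
      (∀ m, {n | m ≤ h n} ∈ 𝒰) ∧
      Tendsto (fun n => ‖r (h n) n * s n - r (h n) n‖) 𝒰 (nhds 0) := by
  classical
  set P : ℕ → ℕ → Prop := fun m n => ∀ k ≤ m, ‖r k n * s n - r k n‖ < 1 / (k + 1) with hP
  set h : ℕ → ℕ := fun n => Nat.findGreatest (fun m => P m n) n with hh
  -- the "good sets" belong to the ultrafilter
  have hT : ∀ m, {n | P m n} ∈ 𝒰 := by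
    intro m
    have : ∀ᶠ n in (𝒰 : Filter ℕ), ∀ k ∈ Set.Iic m, ‖r k n * s n - r k n‖ < 1 / (k + 1) := by
      rw [eventually_all_finite (Set.finite_Iic m)]
      intro k _
      have hpos : (0 : ℝ) < 1 / (k + 1) := by positivity
      have := Metric.tendsto_nhds.mp (hbelow k) _ hpos
      filter_upwards [this] with n hn
      rwa [Real.dist_eq, sub_zero, abs_of_nonneg (norm_nonneg _)] at hn
    filter_upwards [this] with n hn k hk
    exact hn k hk
  have hge : ∀ m, {n | m ≤ n} ∈ 𝒰 := by
    intro m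
    apply h𝒰
    rw [Filter.mem_cofinite]
    have : {n : ℕ | m ≤ n}ᶜ ⊆ Set.Iio m := by
      intro n hn
      simpa using hn
    exact (Set.finite_Iio m).subset this
  have key : ∀ m, ∀ n, P m n → m ≤ n → (m ≤ h n ∧ P (h n) n) := by
    intro m n hPm hmn
    constructor
    · exact Nat.le_findGreatest (P := fun m => P m n) hmn hPm
    · exact Nat.findGreatest_spec (P := fun m => P m n) hmn hPm
  refine ⟨h, ?_, ?_⟩
  · intro m
    filter_upwards [hT m, hge m] with n hn hmn
    exact (key m n hn hmn).1
  · rw [Metric.tendsto_nhds]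
    intro ε hε
    obtain ⟨m, hm⟩ := exists_nat_gt (1 / ε)
    have hmε : 1 / ((m : ℝ) + 1) < ε := by
      rw [div_lt_iff₀ (by positivity)]
      rw [div_lt_iff₀ hε] at hm
      nlinarith
    filter_upwards [hT m, hge m] with n hn hmn
    obtain ⟨h1, h2⟩ := key m n hn hmn
    have := h2 (h n) le_rfl
    rw [Real.dist_eq, sub_zero, abs_of_nonneg (norm_nonneg _)]
    calc ‖r (h n) n * s n - r (h n) n‖ < 1 / ((h n : ℝ) + 1) := this
      _ ≤ 1 / ((m : ℝ) + 1) := by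
          apply one_div_le_one_div_of_le (by positivity)
          exact_mod_cast Nat.add_le_add_right h1 1
      _ < ε := hmε
end

section
/- Let A be a C*-algebra and let 𝒰 be a nonprincipal ultrafilter on ℕ. Let r : ℕ → ℕ → A be a doubly-indexed family such that each r(i)(n) is a projection, r(i)(n) ≤ r(j)(n) whenever i ≤ j, and r(i)(n) ≠ r(j)(n) whenever i < j < n (so that for each n the projections r(0)(n) ≤ r(1)(n) ≤ … ≤ r(n−1)(n) form a strictly increasing chain of length n). Let f, g : ℕ → ℕ satisfy f(n) < n and g(n) < n for all n ≥ 1. Then f ≤_𝒰 g if and only if ‖r(g(n))(n)·r(f(n))(n)·r(g(n))(n) − r(f(n))(n)‖ tends to 0 along 𝒰. -/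
open Filter

theorem le_ultrafilter_iff_diagonal_projection_le
    {A : Type*} [NonUnitalNormedRing A] [StarRing A] [CStarRing A]
    [CompleteSpace A] [NormedSpace ℂ A] [IsScalarTower ℂ A A]
    [SMulCommClass ℂ A A] [StarModule ℂ A]
    (𝒰 : Ultrafilter ℕ) (h𝒰 : (𝒰 : Filter ℕ) ≤ Filter.cofinite)
    (r : ℕ → ℕ → A)
    (hr : ∀ i n, IsSelfAdjoint (r i n) ∧ r i n * r i n = r i n)
    (hmono : ∀ i j n, i ≤ j → r i n * r j n = r i n)
    (hstrict : ∀ i j n, i < j → j < n → r i n ≠ r j n)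
    (f g : ℕ → ℕ)
    (hf : ∀ n, 1 ≤ n → f n < n) (hg : ∀ n, 1 ≤ n → g n < n) :
    {n | f n ≤ g n} ∈ 𝒰 ↔
      Tendsto (fun n => ‖r (g n) n * r (f n) n * r (g n) n - r (f n) n‖) 𝒰 (nhds 0) := by
  have swap : ∀ i j n, i ≤ j → r j n * r i n = r i n := by
    intro i j n hij
    have h1 := hmono i j n hij
    have := congrArg star h1
    rwa [star_mul, (hr i n).1.star_eq, (hr j n).1.star_eq] at this
  constructor
  · intro hU
    have hev : ∀ᶠ n in (𝒰 : Filter ℕ),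
        ‖r (g n) n * r (f n) n * r (g n) n - r (f n) n‖ = 0 := by
      filter_upwards [hU] with n hn
      rw [swap (f n) (g n) n hn, hmono (f n) (g n) n hn, sub_self, norm_zero]
    exact Tendsto.congr' (hev.mono fun n h => h.symm) tendsto_const_nhds
  · intro hT
    by_contra hne
    have hlt : {n | g n < f n} ∈ 𝒰 := by
      have := (Ultrafilter.compl_mem_iff_notMem (s := {n | f n ≤ g n})).2 hne
      have hc : ({n | f n ≤ g n})ᶜ = {n | g n < f n} := by
        ext n; simp [not_le]
      rwa [hc] at this
    have hpos : {n | 1 ≤ n} ∈ 𝒰 := by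
      apply h𝒰
      rw [Nat.cofinite_eq_atTop]
      exact Filter.mem_atTop 1
    have hone : ∀ n, 1 ≤ n → g n < f n →
        ‖r (g n) n * r (f n) n * r (g n) n - r (f n) n‖ = 1 := by
      intro n h1 hglt
      have hgf : r (g n) n * r (f n) n = r (g n) n := hmono _ _ _ hglt.le
      have hfg : r (f n) n * r (g n) n = r (g n) n := swap _ _ _ hglt.le
      have hexpr : r (g n) n * r (f n) n * r (g n) n - r (f n) n
          = -(r (f n) n - r (g n) n) := by
        rw [hgf, (hr (g n) n).2]; abel
      rw [hexpr, norm_neg]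
      set e := r (f n) n - r (g n) n with he
      have he2 : e * e = e := by
        rw [he, mul_sub, sub_mul, sub_mul, (hr (f n) n).2, (hr (g n) n).2, hgf, hfg]
        abel
      have hesa : IsSelfAdjoint e := (hr (f n) n).1.sub (hr (g n) n).1
      have hene : e ≠ 0 :=
        sub_ne_zero.2 (Ne.symm (hstrict (g n) (f n) n hglt (hf n h1)))
      have hmul : ‖e‖ * ‖e‖ = ‖e‖ := by
        rw [← CStarRing.norm_star_mul_self, hesa.star_eq, he2]
      have hnz : ‖e‖ ≠ 0 := norm_ne_zero_iff.2 hene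
      field_simp at hmul
      exact hmul
    have hsmall : {n | ‖r (g n) n * r (f n) n * r (g n) n - r (f n) n‖ < 1/2} ∈ 𝒰 := by
      have := hT (Metric.ball_mem_nhds (0 : ℝ) (by norm_num : (0:ℝ) < 1/2))
      refine Filter.mem_of_superset this ?_
      intro n hn
      simpa [Real.dist_eq, abs_lt] using (mem_ball_zero_iff.1 hn)
    have hmem : {n | g n < f n} ∩ ({n | 1 ≤ n} ∩
        {n | ‖r (g n) n * r (f n) n * r (g n) n - r (f n) n‖ < 1/2}) ∈ 𝒰 :=
      Filter.inter_mem hlt (Filter.inter_mem hpos hsmall)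
    obtain ⟨n, hn1, hn2, hn3⟩ := (𝒰.nonempty_of_mem hmem)
    simp only [Set.mem_setOf_eq] at hn1 hn2 hn3
    rw [hone n hn2 hn1] at hn3
    norm_num at hn3
end

section
/- Let A be a C*-algebra and let 𝒰 be a nonprincipal ultrafilter on ℕ. Let r : ℕ → ℕ → A be a doubly-indexed family such that each r(i)(n) is a projection, r(i)(n) ≤ r(j)(n) whenever i ≤ j, and r(i)(n) ≠ r(j)(n) whenever i < j < n. Let G be a set of functions g : ℕ → ℕ, each nondecreasing with lim_n g(n) = ∞ and satisfying g(n) < n for all n ≥ 1, such that there is NO function h : ℕ → ℕ with both (a) for every m, the set {n : m ≤ h(n)} belongs to 𝒰, and (b) for every g ∈ G, the set {n : h(n) ≤ g(n)} belongs to 𝒰. Then there is NO sequence s : ℕ → A of projections such that both (i) for every m, ‖r(m)(n)·s(n) − r(m)(n)‖ tends to 0 along 𝒰 (as a function of n), and (ii) for every g ∈ G, ‖s(n)·r(g(n))(n) − s(n)‖ tends to 0 along 𝒰. -/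
open Filter

/-- Key C*-algebra lemma: three projections `p, q, s` with `q ≤ p`, `q ≠ p`,
`‖p*s - p‖ < 1/4` and `‖s*q - s‖ < 1/4` give a contradiction. -/
lemma no_interp_key {A : Type*} [NonUnitalNormedRing A] [StarRing A] [CStarRing A]
    (p q s : A) (hp : IsSelfAdjoint p) (hp2 : p * p = p)
    (hq : IsSelfAdjoint q) (hq2 : q * q = q)
    (hqp : q * p = q) (hne : q ≠ p)
    (h1 : ‖p * s - p‖ < 4⁻¹) (h2 : ‖s * q - s‖ < 4⁻¹) : False := by
  have hpq : p * q = q := by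
    have := congrArg star hqp
    rwa [star_mul, hp.star_eq, hq.star_eq] at this
  obtain ⟨e, he⟩ : ∃ e : A, e = p - q := ⟨_, rfl⟩
  have he2 : e * e = e := by
    rw [he]; simp only [sub_mul, mul_sub, hp2, hq2, hpq, hqp]; abel
  have hes : IsSelfAdjoint e := he ▸ hp.sub hq
  have hene : e ≠ 0 := by
    rw [he]; exact sub_ne_zero.mpr fun h => hne h.symm
  have hnorm : ‖e‖ = 1 := by
    have hcs : ‖star e * e‖ = ‖e‖ * ‖e‖ := CStarRing.norm_star_mul_self
    rw [hes.star_eq, he2] at hcs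
    have h0 : (0:ℝ) < ‖e‖ := norm_pos_iff.mpr hene
    have : ‖e‖ * 1 = ‖e‖ * ‖e‖ := by rw [mul_one]; exact hcs
    exact (mul_left_cancel₀ h0.ne' this).symm
  have hqnorm : ‖q‖ ≤ 1 := by
    rcases eq_or_ne q 0 with h | h
    · simp [h]
    · have hcs : ‖star q * q‖ = ‖q‖ * ‖q‖ := CStarRing.norm_star_mul_self
      rw [hq.star_eq, hq2] at hcs
      have h0 : 0 < ‖q‖ := norm_pos_iff.mpr h
      nlinarith
  have hep : e * p = e := by
    rw [he]; simp only [sub_mul, hp2, hqp]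
  have heq : e * q = 0 := by
    rw [he]; simp only [sub_mul, hpq, hq2, sub_self]
  have hes1 : ‖e * s - e‖ < 4⁻¹ := by
    calc ‖e * s - e‖ = ‖e * (p * s - p)‖ := by
          rw [mul_sub, ← mul_assoc, hep]
      _ ≤ ‖e‖ * ‖p * s - p‖ := norm_mul_le _ _
      _ < 4⁻¹ := by rw [hnorm, one_mul]; exact h1
  have hes2 : ‖e * s * q - e * s‖ < 4⁻¹ := by
    calc ‖e * s * q - e * s‖ = ‖e * (s * q - s)‖ := by
          rw [mul_sub, ← mul_assoc]
      _ ≤ ‖e‖ * ‖s * q - s‖ := norm_mul_le _ _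
      _ < 4⁻¹ := by rw [hnorm, one_mul]; exact h2
  have hes3 : ‖e * s * q‖ < 4⁻¹ := by
    calc ‖e * s * q‖ = ‖(e * s - e) * q‖ := by rw [sub_mul, heq, sub_zero]
      _ ≤ ‖e * s - e‖ * ‖q‖ := norm_mul_le _ _
      _ ≤ ‖e * s - e‖ * 1 := mul_le_mul_of_nonneg_left hqnorm (norm_nonneg _)
      _ < 4⁻¹ := by rw [mul_one]; exact hes1
  have hid : (e - e * s) + (e * s - e * s * q) + e * s * q = e := by
    rw [sub_add_sub_cancel, sub_add_cancel]
  have hfin : ‖e‖ ≤ ‖e - e * s‖ + ‖e * s - e * s * q‖ + ‖e * s * q‖ := by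
    calc ‖e‖ = ‖(e - e * s) + (e * s - e * s * q) + e * s * q‖ := by rw [hid]
      _ ≤ _ := norm_add₃_le
  rw [hnorm, norm_sub_rev e (e * s), norm_sub_rev (e * s) (e * s * q)] at hfin
  linarith

theorem no_interpolating_projection_of_gap
    {A : Type*} [NonUnitalNormedRing A] [StarRing A] [CStarRing A]
    [CompleteSpace A] [NormedSpace ℂ A] [IsScalarTower ℂ A A]
    [SMulCommClass ℂ A A] [StarModule ℂ A]
    (𝒰 : Ultrafilter ℕ) (h𝒰 : (𝒰 : Filter ℕ) ≤ Filter.cofinite)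
    (r : ℕ → ℕ → A)
    (hr : ∀ i n, IsSelfAdjoint (r i n) ∧ r i n * r i n = r i n)
    (hmono : ∀ i j n, i ≤ j → r i n * r j n = r i n)
    (hstrict : ∀ i j n, i < j → j < n → r i n ≠ r j n)
    (G : Set (ℕ → ℕ))
    (hG : ∀ g ∈ G, Monotone g ∧ Tendsto g atTop atTop ∧ ∀ n, 1 ≤ n → g n < n)
    (hgap : ¬ ∃ h : ℕ → ℕ,
      (∀ m, {n | m ≤ h n} ∈ 𝒰) ∧ (∀ g ∈ G, {n | h n ≤ g n} ∈ 𝒰)) :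
    ¬ ∃ s : ℕ → A,
      (∀ n, IsSelfAdjoint (s n) ∧ s n * s n = s n) ∧
      (∀ m, Tendsto (fun n => ‖r m n * s n - r m n‖) 𝒰 (nhds 0)) ∧
      (∀ g ∈ G, Tendsto (fun n => ‖s n * r (g n) n - s n‖) 𝒰 (nhds 0)) := by
  classical
  rintro ⟨s, hs, hlow, hhigh⟩
  -- define h n as the greatest k < n with ‖r k n * s n - r k n‖ < 1/4
  set P : ℕ → ℕ → Prop := fun n k => ‖r k n * s n - r k n‖ < 4⁻¹ with hP
  set h : ℕ → ℕ := fun n => Nat.findGreatest (P n) (n - 1) with hh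
  apply hgap
  refine ⟨h, ?_, ?_⟩
  · intro m
    have hmem1 : {n | ‖r m n * s n - r m n‖ < 4⁻¹} ∈ 𝒰 :=
      (hlow m) (Iio_mem_nhds (by norm_num))
    have hmem2 : {n | m + 1 ≤ n} ∈ 𝒰 := by
      apply h𝒰
      rw [Nat.cofinite_eq_atTop]
      exact mem_atTop (m + 1)
    filter_upwards [hmem1, hmem2] with n h1 h2
    exact Nat.le_findGreatest (by omega) h1
  · intro g hg
    have hmem1 : {n | ‖s n * r (g n) n - s n‖ < 4⁻¹} ∈ 𝒰 :=
      (hhigh g hg) (Iio_mem_nhds (by norm_num))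
    have hmem2 : {n | 1 ≤ n} ∈ 𝒰 := by
      apply h𝒰
      rw [Nat.cofinite_eq_atTop]
      exact mem_atTop 1
    filter_upwards [hmem1, hmem2] with n h1 h2
    by_contra hcon
    push_neg at hcon
    -- g n < h n, so h n > 0 and P n (h n) holds
    have hhn : h n ≤ n - 1 := Nat.findGreatest_le _
    have hhn' : h n < n := by omega
    have hPh : P n (h n) := by
      have h0 : h n ≠ 0 := by omega
      exact (Nat.findGreatest_eq_iff.mp (rfl : Nat.findGreatest (P n) (n-1) = h n)).2.1 h0
    exact no_interp_key (r (h n) n) (r (g n) n) (s n)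
      (hr (h n) n).1 (hr (h n) n).2 (hr (g n) n).1 (hr (g n) n).2
      (hmono (g n) (h n) n hcon.le)
      (hstrict (g n) (h n) n hcon hhn') hPh h1
end

section
/- Let A be a C*-algebra, let r ∈ A be a projection, and let q ∈ A be a projection with q ≤ r. If both corners q·A·q and (r − q)·A·(r − q) are finite-dimensional as complex vector spaces, then the corner r·A·r is finite-dimensional as a complex vector space. -/
open LinearMap Submodule

section Helpers

variable {A : Type*} [NonUnitalNormedRing A] [StarRing A] [CStarRing A]
    [CompleteSpace A] [NormedSpace ℂ A] [IsScalarTower ℂ A A]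
    [SMulCommClass ℂ A A] [StarModule ℂ A]

private lemma cf_mem_corner_iff (e f x : A) (hee : e * e = e) (hff : f * f = f) :
    x ∈ LinearMap.range ((LinearMap.mulLeft ℂ e).comp (LinearMap.mulRight ℂ f)) ↔
      e * x * f = x := by
  constructor
  · rintro ⟨a, rfl⟩
    simp only [coe_comp, Function.comp_apply, mulRight_apply, mulLeft_apply]
    calc e * (e * (a * f)) * f = (e * e) * (a * ((f * f))) := by simp only [mul_assoc]
      _ = e * (a * f) := by rw [hee, hff]
  · intro hx
    refine ⟨x, ?_⟩
    simp only [coe_comp, Function.comp_apply, mulRight_apply, mulLeft_apply, ← mul_assoc]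
    exact hx

private lemma cf_eq_zero_of_sum_star_mul_self {ι : Type*} (s : Finset ι) (g : ι → A)
    (h : ∑ i ∈ s, star (g i) * g i = 0) : ∀ i ∈ s, g i = 0 := by
  letI : NonUnitalCStarAlgebra A := {}
  letI : PartialOrder (Unitization ℂ A) := CStarAlgebra.spectralOrder _
  haveI : StarOrderedRing (Unitization ℂ A) := CStarAlgebra.spectralOrderedRing _
  have h' : ∑ i ∈ s, star ((g i : Unitization ℂ A)) * (g i : Unitization ℂ A) = 0 := by
    have := congrArg (Unitization.inrNonUnitalStarAlgHom ℂ A) h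
    simpa [map_sum] using this
  intro i hi
  have h2 : star ((g i : Unitization ℂ A)) * (g i : Unitization ℂ A) = 0 :=
    (Finset.sum_eq_zero_iff_of_nonneg (fun j _ => star_mul_self_nonneg _)).mp h' i hi
  have h3 : ((g i : A) : Unitization ℂ A) = 0 :=
    (CStarRing.star_mul_self_eq_zero_iff _).mp h2
  exact Unitization.inr_injective (by simpa using h3)

private lemma cf_corner_offdiag (e f : A)
    (he : IsSelfAdjoint e ∧ e * e = e) (hf : IsSelfAdjoint f ∧ f * f = f)
    (hE : FiniteDimensional ℂ
      (LinearMap.range ((LinearMap.mulLeft ℂ e).comp (LinearMap.mulRight ℂ e))))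
    (hF : FiniteDimensional ℂ
      (LinearMap.range ((LinearMap.mulLeft ℂ f).comp (LinearMap.mulRight ℂ f)))) :
    FiniteDimensional ℂ
      (LinearMap.range ((LinearMap.mulLeft ℂ e).comp (LinearMap.mulRight ℂ f))) := by
  obtain ⟨hesa, hee⟩ := he
  obtain ⟨hfsa, hff⟩ := hf
  haveI := hE; haveI := hF
  -- basic one-sided absorption facts
  have hle : ∀ y : A, e * y * f = y → e * y = y := by
    intro y hy
    conv_lhs => rw [← hy]
    simp only [← mul_assoc]
    rw [hee, hy]
  have hrf : ∀ y : A, e * y * f = y → y * f = y := by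
    intro y hy
    conv_lhs => rw [← hy]
    simp only [mul_assoc]
    rw [hff]
    simp only [← mul_assoc]
    exact hy
  have hstar_e : ∀ z : A, e * z * f = z → star z * e = star z := by
    intro z hz
    rw [← hesa.star_eq, ← star_mul, hle z hz]
  have hstar_f : ∀ z : A, e * z * f = z → f * star z = star z := by
    intro z hz
    rw [← hfsa.star_eq, ← star_mul, hrf z hz]
  set S : Set A := {x | ∃ y z : A, e * y * f = y ∧ e * z * f = z ∧ x = y * star z} with hS
  set B : Submodule ℂ A := Submodule.span ℂ S with hBdef
  have hBle : B ≤ LinearMap.range ((LinearMap.mulLeft ℂ e).comp (LinearMap.mulRight ℂ e)) := by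
    rw [hBdef]
    apply span_le.mpr
    rintro x ⟨y, z, hy, hz, rfl⟩
    rw [SetLike.mem_coe, cf_mem_corner_iff e e _ hee hee]
    calc e * (y * star z) * e = (e * y) * (star z * e) := by simp only [mul_assoc]
      _ = y * star z := by rw [hle y hy, hstar_e z hz]
  haveI hBfd : FiniteDimensional ℂ B := Submodule.finiteDimensional_of_le hBle
  have hBstar : ∀ x ∈ B, star x ∈ B := by
    intro x hx
    refine Submodule.span_induction (p := fun x _ => star x ∈ B) ?_ ?_ ?_ ?_ hx
    · rintro x ⟨y, z, hy, hz, rfl⟩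
      rw [star_mul, star_star]
      exact subset_span ⟨z, y, hz, hy, rfl⟩
    · simpa using zero_mem B
    · intro a b _ _ ha hb
      rw [star_add]; exact add_mem ha hb
    · intro c a _ ha
      rw [star_smul]; exact smul_mem _ _ ha
  have hBmul : ∀ x ∈ B, ∀ w ∈ B, x * w ∈ B := by
    intro x hx
    refine Submodule.span_induction (p := fun x _ => ∀ w ∈ B, x * w ∈ B) ?_ ?_ ?_ ?_ hx
    · rintro x ⟨y1, z1, hy1, hz1, rfl⟩ w hw
      refine Submodule.span_induction (p := fun w _ => (y1 * star z1) * w ∈ B) ?_ ?_ ?_ ?_ hw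
      · rintro w ⟨y2, z2, hy2, hz2, rfl⟩
        have hw0 : e * ((z2 * star y2) * z1) * f = (z2 * star y2) * z1 := by
          have h1 : e * ((z2 * star y2) * z1) = (z2 * star y2) * z1 := by
            simp only [← mul_assoc]
            rw [hle z2 hz2]
          have h2 : ((z2 * star y2) * z1) * f = (z2 * star y2) * z1 := by
            rw [mul_assoc, hrf z1 hz1]
          rw [h1, h2]
        refine subset_span ⟨y1, (z2 * star y2) * z1, hy1, hw0, ?_⟩
        rw [star_mul, star_mul, star_star]
        simp only [← mul_assoc]
      · simpa using zero_mem B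
      · intro a b _ _ ha hb
        rw [mul_add]; exact add_mem ha hb
      · intro c a _ ha
        rw [mul_smul_comm]; exact smul_mem _ _ ha
    · intro w _
      simpa using zero_mem B
    · intro a b _ _ ha hb w hw
      rw [add_mul]; exact add_mem (ha w hw) (hb w hw)
    · intro c a _ ha w hw
      rw [smul_mul_assoc]; exact smul_mem _ _ (ha w hw)
  obtain ⟨t, ht⟩ : B.FG := (Submodule.fg_iff_finiteDimensional B).mpr hBfd
  have htB : ∀ x ∈ t, x ∈ B := fun x hx => ht ▸ subset_span hx
  set h : A := ∑ x ∈ t, star x * x with hh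
  have hhB : h ∈ B := Submodule.sum_mem _ fun x hx => hBmul _ (hBstar _ (htB x hx)) _ (htB x hx)
  have hkill : ∀ x : A, h * x = 0 → ∀ c ∈ B, c * x = 0 := by
    intro x hx0
    have hsum : ∑ c ∈ t, star (c * x) * (c * x) = 0 := by
      calc ∑ c ∈ t, star (c * x) * (c * x) = star x * (h * x) := by
            rw [hh, Finset.sum_mul, Finset.mul_sum]
            exact Finset.sum_congr rfl fun c _ => by
              rw [star_mul]; simp only [mul_assoc]
        _ = 0 := by rw [hx0, mul_zero]
    have hz := cf_eq_zero_of_sum_star_mul_self t (fun c => c * x) hsum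
    intro c hc
    have hle' : B ≤ LinearMap.ker (LinearMap.mulRight ℂ x) := by
      rw [← ht]
      apply span_le.mpr
      intro c' hc'
      simp only [SetLike.mem_coe, LinearMap.mem_ker, mulRight_apply]
      exact hz c' hc'
    simpa using hle' hc
  have hinj : ∀ x ∈ B, h * x = 0 → x = 0 := by
    intro x hxB hx0
    exact (CStarRing.star_mul_self_eq_zero_iff x).mp (hkill x hx0 (star x) (hBstar x hxB))
  have hmapsto : ∀ x ∈ B, (LinearMap.mulLeft ℂ h) x ∈ B := fun x hx => hBmul h hhB x hx
  set Lh : B →ₗ[ℂ] B := (LinearMap.mulLeft ℂ h).restrict hmapsto with hLh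
  have hLhinj : Function.Injective Lh := by
    rw [← LinearMap.ker_eq_bot, eq_bot_iff]
    rintro z hz
    rw [LinearMap.mem_ker] at hz
    have hz' : h * (z : A) = 0 := congrArg Subtype.val hz
    exact (Submodule.mem_bot ℂ).mpr (Subtype.ext (hinj z.1 z.2 hz'))
  obtain ⟨u, hu⟩ := LinearMap.surjective_of_injective hLhinj ⟨h, hhB⟩
  have hu' : h * (u : A) = h := congrArg Subtype.val hu
  set u0 : A := (u : A) with hu0
  have huB : u0 ∈ B := u.2
  have hlunit : ∀ c ∈ B, u0 * c = c := by
    intro c hc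
    have h1 : h * (u0 * c - c) = 0 := by
      rw [mul_sub, ← mul_assoc, hu', sub_self]
    exact sub_eq_zero.mp (hinj _ (sub_mem (hBmul _ huB _ hc) hc) h1)
  have hrunit : ∀ c ∈ B, c * star u0 = c := by
    intro c hc
    calc c * star u0 = star (u0 * star c) := by rw [star_mul, star_star]
      _ = star (star c) := by rw [hlunit (star c) (hBstar c hc)]
      _ = c := star_star c
  have hMunit : ∀ y : A, e * y * f = y → u0 * y = y := by
    intro y hy
    have hyyB : y * star y ∈ B := subset_span ⟨y, y, hy, hy, rfl⟩
    have e1 : (u0 * y) * star y = y * star y := by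
      rw [mul_assoc]; exact hlunit _ hyyB
    have e2 : y * (star y * star u0) = y * star y := by
      rw [← mul_assoc]; exact hrunit _ hyyB
    have e3 : (u0 * y) * (star y * star u0) = y * star y := by
      calc (u0 * y) * (star y * star u0) = u0 * (y * (star y * star u0)) := by
            simp only [mul_assoc]
        _ = u0 * (y * star y) := by rw [e2]
        _ = y * star y := hlunit _ hyyB
    have key : (y - u0 * y) * star (y - u0 * y) = 0 := by
      rw [star_sub, star_mul, mul_sub, sub_mul, sub_mul, e1, e2, e3]
      simp
    have := sub_eq_zero.mp ((CStarRing.mul_star_self_eq_zero_iff _).mp key)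
    exact this.symm
  have huspan : u0 ∈ Submodule.span ℂ S := hBdef ▸ huB
  obtain ⟨n, c, g, hg⟩ := mem_span_set'.mp huspan
  choose Y Z hY hZ hYZ using fun i : Fin n => (g i).2
  set D := LinearMap.range ((LinearMap.mulLeft ℂ f).comp (LinearMap.mulRight ℂ f)) with hD
  set Φ : (Fin n → D) →ₗ[ℂ] A :=
    ∑ i : Fin n, (LinearMap.mulLeft ℂ (Y i)) ∘ₗ (D.subtype ∘ₗ LinearMap.proj i) with hΦ
  have hMle : LinearMap.range ((LinearMap.mulLeft ℂ e).comp (LinearMap.mulRight ℂ f)) ≤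
      LinearMap.range Φ := by
    intro x hx
    rw [cf_mem_corner_iff e f x hee hff] at hx
    have hdmem : ∀ i : Fin n, f * (c i • (star (Z i) * x)) * f = c i • (star (Z i) * x) := by
      intro i
      have h1 : f * (star (Z i) * x) = star (Z i) * x := by
        rw [← mul_assoc, hstar_f (Z i) (hZ i)]
      have h2 : (star (Z i) * x) * f = star (Z i) * x := by
        rw [mul_assoc, hrf x hx]
      rw [mul_smul_comm, smul_mul_assoc, h1, h2]
    refine ⟨fun i => ⟨c i • (star (Z i) * x), (cf_mem_corner_iff f f _ hff hff).mpr (hdmem i)⟩, ?_⟩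
    have hux : u0 * x = x := hMunit x hx
    calc Φ (fun i => ⟨c i • (star (Z i) * x), (cf_mem_corner_iff f f _ hff hff).mpr (hdmem i)⟩)
        = ∑ i : Fin n, c i • (Y i * (star (Z i) * x)) := by
          rw [hΦ]
          simp [mul_smul_comm]
      _ = (∑ i : Fin n, c i • (Y i * star (Z i))) * x := by
          rw [Finset.sum_mul]
          exact Finset.sum_congr rfl fun i _ => by rw [smul_mul_assoc, mul_assoc]
      _ = u0 * x := by
          congr 1
          rw [← hg]
          exact Finset.sum_congr rfl fun i _ => by rw [hYZ i]
      _ = x := hux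
  exact Submodule.finiteDimensional_of_le hMle

end Helpers

theorem corner_finiteDimensional_of_pieces
    {A : Type*} [NonUnitalNormedRing A] [StarRing A] [CStarRing A]
    [CompleteSpace A] [NormedSpace ℂ A] [IsScalarTower ℂ A A]
    [SMulCommClass ℂ A A] [StarModule ℂ A]
    (r q : A)
    (hr : IsSelfAdjoint r ∧ r * r = r)
    (hq : IsSelfAdjoint q ∧ q * q = q)
    (hqr : q * r = q)
    (hqAq : FiniteDimensional ℂ
      (LinearMap.range ((LinearMap.mulLeft ℂ q).comp (LinearMap.mulRight ℂ q))))
    (hrqArq : FiniteDimensional ℂ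
      (LinearMap.range ((LinearMap.mulLeft ℂ (r - q)).comp (LinearMap.mulRight ℂ (r - q))))) :
    FiniteDimensional ℂ
      (LinearMap.range ((LinearMap.mulLeft ℂ r).comp (LinearMap.mulRight ℂ r))) := by
  obtain ⟨hrsa, hrr⟩ := hr
  obtain ⟨hqsa, hqq⟩ := hq
  have hrq : r * q = q := by
    have := congrArg star hqr
    rwa [star_mul, hrsa.star_eq, hqsa.star_eq] at this
  have hpsa : IsSelfAdjoint (r - q) := hrsa.sub hqsa
  have hpp : (r - q) * (r - q) = r - q := by
    rw [mul_sub, sub_mul, sub_mul, hrr, hrq, hqr, hqq]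
    abel
  have hM : FiniteDimensional ℂ
      (LinearMap.range ((LinearMap.mulLeft ℂ q).comp (LinearMap.mulRight ℂ (r - q)))) :=
    cf_corner_offdiag q (r - q) ⟨hqsa, hqq⟩ ⟨hpsa, hpp⟩ hqAq hrqArq
  have hM' : FiniteDimensional ℂ
      (LinearMap.range ((LinearMap.mulLeft ℂ (r - q)).comp (LinearMap.mulRight ℂ q))) :=
    cf_corner_offdiag (r - q) q ⟨hpsa, hpp⟩ ⟨hqsa, hqq⟩ hrqArq hqAq
  haveI := hqAq; haveI := hrqArq; haveI := hM; haveI := hM'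
  have hle : LinearMap.range ((LinearMap.mulLeft ℂ r).comp (LinearMap.mulRight ℂ r)) ≤
      ((LinearMap.range ((LinearMap.mulLeft ℂ q).comp (LinearMap.mulRight ℂ q)) ⊔
        LinearMap.range ((LinearMap.mulLeft ℂ q).comp (LinearMap.mulRight ℂ (r - q)))) ⊔
        LinearMap.range ((LinearMap.mulLeft ℂ (r - q)).comp (LinearMap.mulRight ℂ q))) ⊔
        LinearMap.range ((LinearMap.mulLeft ℂ (r - q)).comp (LinearMap.mulRight ℂ (r - q))) := by
    rintro x ⟨a, rfl⟩
    have hsplit : ((LinearMap.mulLeft ℂ r).comp (LinearMap.mulRight ℂ r)) a =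
        q * (a * q) + q * (a * (r - q)) + (r - q) * (a * q) + (r - q) * (a * (r - q)) := by
      simp only [coe_comp, Function.comp_apply, mulRight_apply, mulLeft_apply, mul_sub, sub_mul]
      abel
    rw [hsplit]
    have m1 : q * (a * q) ∈
        LinearMap.range ((LinearMap.mulLeft ℂ q).comp (LinearMap.mulRight ℂ q)) := ⟨a, rfl⟩
    have m2 : q * (a * (r - q)) ∈
        LinearMap.range ((LinearMap.mulLeft ℂ q).comp (LinearMap.mulRight ℂ (r - q))) := ⟨a, rfl⟩
    have m3 : (r - q) * (a * q) ∈
        LinearMap.range ((LinearMap.mulLeft ℂ (r - q)).comp (LinearMap.mulRight ℂ q)) := ⟨a, rfl⟩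
    have m4 : (r - q) * (a * (r - q)) ∈
        LinearMap.range ((LinearMap.mulLeft ℂ (r - q)).comp (LinearMap.mulRight ℂ (r - q))) :=
      ⟨a, rfl⟩
    exact add_mem (add_mem (add_mem
      (Submodule.mem_sup_left (Submodule.mem_sup_left (Submodule.mem_sup_left m1)))
      (Submodule.mem_sup_left (Submodule.mem_sup_left (Submodule.mem_sup_right m2))))
      (Submodule.mem_sup_left (Submodule.mem_sup_right m3)))
      (Submodule.mem_sup_right m4)
  exact Submodule.finiteDimensional_of_le hle
end
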